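/- Let G' be the Type B Whitney flip of a simple graph G along (H, v1, v2), and let φ be the map sending each edge {x, y} of G with both endpoints in H to {τ(x), τ(y)} and fixing every other edge of G. Then φ is a bijection from the edge set of G onto the edge set of G', and a set C of edges of G is the edge set of a cycle of G if and only if φ(C) is the edge set of a cycle of G'. In particular, for every integer k, G has a cycle of length k if and only if G' has a cycle of length k. -/

import Mathlib

attribute [local instance] Classical.propDecidable

open SimpleGraph

/-- The vertex map of the Type B Whitney flip: `v1 ↦ v2`, all other vertices fixed. -/
def tauB {V : Type*} [DecidableEq V] (v1 v2 : V) (x : V) : V :=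
  if x = v1 then v2 else x

/-- The Type B Whitney flip of `G` along `(H, v1, v2)` (where `v2 ∉ H`): edges with both
endpoints in `H` are mapped by `tauB v1 v2`; all other edges are kept. -/
def typeBFlip {V : Type*} [DecidableEq V] (G : SimpleGraph V) (v1 v2 : V) (H : Set V)
    (hv2 : v2 ∉ H) : SimpleGraph V where
  Adj a b :=
    (∃ x y : V, x ∈ H ∧ y ∈ H ∧ G.Adj x y ∧ a = tauB v1 v2 x ∧ b = tauB v1 v2 y) ∨
    (¬(a ∈ H ∧ b ∈ H) ∧ G.Adj a b)
  symm := by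
    constructor
    rintro a b (⟨x, y, hx, hy, h, ha, hb⟩ | ⟨hn, h⟩)
    · exact Or.inl ⟨y, x, hy, hx, h.symm, hb, ha⟩
    · exact Or.inr ⟨fun ⟨hb', ha'⟩ => hn ⟨ha', hb'⟩, h.symm⟩
  loopless := by
    constructor
    rintro a (⟨x, y, hx, hy, h, ha, hb⟩ | ⟨_, h⟩)
    · have hxy : tauB v1 v2 x = tauB v1 v2 y := ha ▸ hb
      unfold tauB at hxy
      split_ifs at hxy with hx1 hy1 hy1
      · exact h.ne (hx1.trans hy1.symm)
      · exact hv2 (hxy ▸ hy)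
      · exact hv2 (hxy ▸ hx)
      · exact h.ne hxy
    · exact h.ne rfl


/-- The edge map of the Type B Whitney flip: an edge with both endpoints in `H` is
mapped by `tauB v1 v2`; every other edge is fixed. -/
noncomputable def phiB {V : Type*} [DecidableEq V] (v1 v2 : V) (H : Set V)
    (e : Sym2 V) : Sym2 V :=
  if ∀ x ∈ e, x ∈ H then e.map (tauB v1 v2) else e

section Aux

variable {V : Type*} [DecidableEq V]

lemma tauB_eq_swap {v1 v2 : V} {H : Set V} (hv2 : v2 ∉ H) {x : V} (hx : x ∈ H) :
    tauB v1 v2 x = Equiv.swap v1 v2 x := by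
  unfold tauB
  split_ifs with h
  · subst h; simp
  · exact (Equiv.swap_apply_of_ne_of_ne h (by rintro rfl; exact hv2 hx)).symm

lemma tauB_mem {v1 v2 : V} {H : Set V} {x : V} (hx : x ∈ H) :
    tauB v1 v2 x ∈ (H \ {v1}) ∪ ({v2} : Set V) := by
  unfold tauB; split_ifs with h
  · exact Or.inr rfl
  · exact Or.inl ⟨hx, h⟩

lemma swap_mem_H {v1 v2 : V} {H : Set V} (h1 : v1 ∈ H) (hv2 : v2 ∉ H) {x : V}
    (hx : x ∈ (H \ {v1}) ∪ ({v2} : Set V)) : Equiv.swap v1 v2 x ∈ H := by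
  rcases hx with ⟨hxH, hxv⟩ | hx2
  · rwa [Equiv.swap_apply_of_ne_of_ne hxv (by rintro rfl; exact hv2 hxH)]
  · rw [hx2, Equiv.swap_apply_right]; exact h1

lemma sym2_map_tau_eq {v1 v2 : V} {H : Set V} (hv2 : v2 ∉ H) {e : Sym2 V}
    (he : ∀ x ∈ e, x ∈ H) : e.map (tauB v1 v2) = e.map (Equiv.swap v1 v2) := by
  revert he
  induction e using Sym2.ind with
  | _ a b =>
    intro he
    rw [Sym2.map_pair_eq, Sym2.map_pair_eq,
      tauB_eq_swap hv2 (he a (by simp)), tauB_eq_swap hv2 (he b (by simp))]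

lemma phiB_eq_map {v1 v2 : V} {H : Set V} {e : Sym2 V} (he : ∀ x ∈ e, x ∈ H) :
    phiB v1 v2 H e = e.map (tauB v1 v2) := by unfold phiB; exact if_pos he

lemma phiB_eq_self {v1 v2 : V} {H : Set V} {e : Sym2 V} (he : ¬ ∀ x ∈ e, x ∈ H) :
    phiB v1 v2 H e = e := by unfold phiB; exact if_neg he

/-- A closed walk with nodup support has no edges. -/
lemma closed_nodup_edges {G : SimpleGraph V} {u : V} (q : G.Walk u u)
    (h : q.support.Nodup) : q.edges = [] := by
  cases q with
  | nil => rfl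
  | cons hadj r =>
    rw [SimpleGraph.Walk.support_cons, List.nodup_cons] at h
    exact absurd r.end_mem_support h.1

lemma walk_edges_inH (G : SimpleGraph V) (v1 : V) (H : Set V)
    (hHedge : ∀ x y : V, G.Adj x y → x ∈ H \ ({v1} : Set V) → y ∈ H)
    {a b : V} (p : G.Walk a b) :
    a ∈ H → p.support.Nodup → (v1 ∈ p.support → v1 = b) →
      ∀ e ∈ p.edges, ∀ x ∈ e, x ∈ H := by
  induction p with
  | nil => intro _ _ _ e he; simp at he
  | @cons a c b h q ih =>
    intro ha hnd hv e he
    rw [SimpleGraph.Walk.support_cons, List.nodup_cons] at hnd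
    have hane : a ≠ v1 := by
      intro heq
      have hb : v1 = b := hv (by rw [SimpleGraph.Walk.support_cons]; exact heq ▸ List.mem_cons_self (a := a))
      exact hnd.1 ((heq.trans hb) ▸ q.end_mem_support)
    have hc : c ∈ H := hHedge a c h ⟨ha, hane⟩
    rw [SimpleGraph.Walk.edges_cons] at he
    rcases List.mem_cons.mp he with rfl | he'
    · intro x hx
      rcases Sym2.mem_iff.mp hx with rfl | rfl
      exacts [ha, hc]
    · exact ih hc hnd.2 (fun hvq => hv (by rw [SimpleGraph.Walk.support_cons]; exact List.mem_cons_of_mem _ hvq)) e he'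

lemma walk_edges_notinH (G : SimpleGraph V) (v1 : V) (H : Set V)
    (hHedge : ∀ x y : V, G.Adj x y → x ∈ H \ ({v1} : Set V) → y ∈ H)
    {a b : V} (p : G.Walk a b) :
    a ∉ H → p.support.Nodup → (v1 ∈ p.support → v1 = b) →
      ∀ e ∈ p.edges, ¬ ∀ x ∈ e, x ∈ H := by
  induction p with
  | nil => intro _ _ _ e he; simp at he
  | @cons a c b h q ih =>
    intro ha hnd hv e he
    rw [SimpleGraph.Walk.support_cons, List.nodup_cons] at hnd
    rw [SimpleGraph.Walk.edges_cons] at he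
    rcases List.mem_cons.mp he with rfl | he'
    · intro hall; exact ha (hall a (by simp))
    · by_cases hc : c ∈ H
      · by_cases hcv : c = v1
        · have hb : v1 = b := hv (by
            rw [SimpleGraph.Walk.support_cons]
            exact List.mem_cons_of_mem _ (hcv ▸ q.start_mem_support))
          subst hcv
          have hqnil : q.edges = [] := by
            subst hb
            exact closed_nodup_edges q hnd.2
          rw [hqnil] at he'
          simp at he'
        · exact absurd (hHedge c a h.symm ⟨hc, hcv⟩) ha
      · exact ih hc hnd.2 (fun hvq => hv (by rw [SimpleGraph.Walk.support_cons]; exact List.mem_cons_of_mem _ hvq)) e he'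

lemma classify_at (G : SimpleGraph V) (v1 : V) (H : Set V) (h1 : v1 ∈ H)
    (hHedge : ∀ x y : V, G.Adj x y → x ∈ H \ ({v1} : Set V) → y ∈ H)
    {u : V} (c : G.Walk u u) (hc : c.IsCycle) (hu : u = v1 ∨ v1 ∉ c.support) :
    (∀ e ∈ c.edges, ∀ x ∈ e, x ∈ H) ∨ (∀ e ∈ c.edges, ¬ ∀ x ∈ e, x ∈ H) := by
  cases c with
  | nil => exact absurd rfl hc.ne_nil
  | @cons _ w _ h q =>
    have hnd : q.support.Nodup := by
      have h2 := hc.support_nodup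
      rw [SimpleGraph.Walk.support_cons] at h2
      exact h2
    have hv : v1 ∈ q.support → v1 = u := by
      intro hvq
      rcases hu with rfl | hnotin
      · rfl
      · exact absurd (by rw [SimpleGraph.Walk.support_cons]; exact List.mem_cons_of_mem _ hvq) hnotin
    by_cases hw : w ∈ H
    · left
      have hq := walk_edges_inH G v1 H hHedge q hw hnd hv
      intro e he
      rw [SimpleGraph.Walk.edges_cons] at he
      rcases List.mem_cons.mp he with rfl | he'
      · have hu' : u ∈ H := by
          rcases hu with rfl | hnotin
          · exact h1
          · have hwv : w ≠ v1 := fun hh =>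
              hnotin (by rw [SimpleGraph.Walk.support_cons]; exact List.mem_cons_of_mem _ (hh ▸ q.start_mem_support))
            exact hHedge w u h.symm ⟨hw, hwv⟩
        intro x hx
        rcases Sym2.mem_iff.mp hx with rfl | rfl
        exacts [hu', hw]
      · exact hq e he'
    · right
      have hq := walk_edges_notinH G v1 H hHedge q hw hnd hv
      intro e he
      rw [SimpleGraph.Walk.edges_cons] at he
      rcases List.mem_cons.mp he with rfl | he'
      · intro hall; exact hw (hall w (by simp))
      · exact hq e he'

lemma classify (G : SimpleGraph V) (v1 : V) (H : Set V) (h1 : v1 ∈ H)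
    (hHedge : ∀ x y : V, G.Adj x y → x ∈ H \ ({v1} : Set V) → y ∈ H)
    {u : V} (c : G.Walk u u) (hc : c.IsCycle) :
    (∀ e ∈ c.edges, ∀ x ∈ e, x ∈ H) ∨ (∀ e ∈ c.edges, ¬ ∀ x ∈ e, x ∈ H) := by
  by_cases hv : v1 ∈ c.support
  · have hmem : ∀ e, e ∈ (c.rotate v1 hv).edges ↔ e ∈ c.edges := fun e => (c.rotate_edges v1 hv).mem_iff
    rcases classify_at G v1 H h1 hHedge (c.rotate v1 hv) (hc.rotate hv) (Or.inl rfl) with h | h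
    · exact Or.inl fun e he => h e ((hmem e).mpr he)
    · exact Or.inr fun e he => h e ((hmem e).mpr he)
  · exact classify_at G v1 H h1 hHedge c hc (Or.inr hv)

end Aux

section Aux2

variable {V : Type*} [DecidableEq V]

/-- The spanning subgraph of `G` consisting of edges with both endpoints in `H`. -/
def inSub (G : SimpleGraph V) (H : Set V) : SimpleGraph V where
  Adj a b := a ∈ H ∧ b ∈ H ∧ G.Adj a b
  symm := ⟨fun a b ⟨x, y, z⟩ => ⟨y, x, z.symm⟩⟩
  loopless := ⟨fun a ⟨_, _, z⟩ => z.ne rfl⟩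

lemma mem_inSub_edgeSet {G : SimpleGraph V} {H : Set V} {e : Sym2 V}
    (heG : e ∈ G.edgeSet) (hall : ∀ x ∈ e, x ∈ H) : e ∈ (inSub G H).edgeSet := by
  revert heG hall
  induction e using Sym2.ind with
  | _ a b =>
    intro heG hall
    exact (SimpleGraph.mem_edgeSet _).mpr
      ⟨hall a (by simp), hall b (by simp), (SimpleGraph.mem_edgeSet _).mp heG⟩

lemma mem_flip_of_not {G : SimpleGraph V} {v1 v2 : V} {H : Set V} {hv2 : v2 ∉ H}
    {e : Sym2 V} (heG : e ∈ G.edgeSet) (hne : ¬ ∀ x ∈ e, x ∈ H) :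
    e ∈ (typeBFlip G v1 v2 H hv2).edgeSet := by
  revert heG hne
  induction e using Sym2.ind with
  | _ a b =>
    intro heG hne
    refine (SimpleGraph.mem_edgeSet _).mpr (Or.inr ⟨?_, (SimpleGraph.mem_edgeSet _).mp heG⟩)
    rintro ⟨haH, hbH⟩
    exact hne fun x hx => by
      rcases Sym2.mem_iff.mp hx with rfl | rfl
      exacts [haH, hbH]

lemma mapped_mem_flip {G : SimpleGraph V} {v1 v2 : V} {H : Set V} {hv2 : v2 ∉ H}
    {e : Sym2 V} (heG : e ∈ G.edgeSet) (hall : ∀ x ∈ e, x ∈ H) :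
    e.map (tauB v1 v2) ∈ (typeBFlip G v1 v2 H hv2).edgeSet := by
  revert heG hall
  induction e using Sym2.ind with
  | _ a b =>
    intro heG hall
    rw [Sym2.map_pair_eq]
    exact (SimpleGraph.mem_edgeSet _).mpr
      (Or.inl ⟨a, b, hall a (by simp), hall b (by simp), (SimpleGraph.mem_edgeSet _).mp heG, rfl, rfl⟩)

/-- The forward homomorphism. -/
def homFwd (G : SimpleGraph V) (v1 v2 : V) (H : Set V) (hv2 : v2 ∉ H) :
    inSub G H →g typeBFlip G v1 v2 H hv2 where
  toFun := Equiv.swap v1 v2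
  map_rel' := by
    rintro a b ⟨ha, hb, h⟩
    exact Or.inl ⟨a, b, ha, hb, h, (tauB_eq_swap hv2 ha).symm, (tauB_eq_swap hv2 hb).symm⟩

/-- The backward homomorphism. -/
def homBwd (G : SimpleGraph V) (v1 v2 : V) (H : Set V) (hv2 : v2 ∉ H)
    (hHedge : ∀ x y : V, G.Adj x y → x ∈ H \ ({v1} : Set V) → y ∈ H) :
    inSub (typeBFlip G v1 v2 H hv2) ((H \ {v1}) ∪ ({v2} : Set V)) →g G where
  toFun := Equiv.swap v1 v2
  map_rel' := by
    rintro a b ⟨ha, hb, hadj⟩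
    rcases hadj with ⟨x, y, hx, hy, h, rfl, rfl⟩ | ⟨hn, h⟩
    · have hxx : Equiv.swap v1 v2 (tauB v1 v2 x) = x := by
        rw [tauB_eq_swap hv2 hx, Equiv.swap_apply_self]
      have hyy : Equiv.swap v1 v2 (tauB v1 v2 y) = y := by
        rw [tauB_eq_swap hv2 hy, Equiv.swap_apply_self]
      simpa only [hxx, hyy] using h
    · exfalso
      rcases ha with ⟨haH, hav⟩ | ha2
      · exact hn ⟨haH, hHedge a b h ⟨haH, hav⟩⟩
      · rcases hb with ⟨hbH, hbv⟩ | hb2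
        · exact hv2 (ha2 ▸ hHedge b a h.symm ⟨hbH, hbv⟩)
        · exact h.ne (ha2.trans hb2.symm)

lemma allH_of_allH' {G : SimpleGraph V} {v1 v2 : V} {H : Set V} (hv2 : v2 ∉ H)
    (hHedge : ∀ x y : V, G.Adj x y → x ∈ H \ ({v1} : Set V) → y ∈ H)
    {e : Sym2 V} (heG : e ∈ G.edgeSet)
    (hall : ∀ x ∈ e, x ∈ (H \ {v1}) ∪ ({v2} : Set V)) : ∀ x ∈ e, x ∈ H := by
  revert heG hall
  induction e using Sym2.ind with
  | _ a b =>
    intro heG hall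
    have h : G.Adj a b := (SimpleGraph.mem_edgeSet _).mp heG
    have key : ∀ p q : V, G.Adj p q → p ∈ (H \ {v1}) ∪ ({v2} : Set V) →
        q ∈ (H \ {v1}) ∪ ({v2} : Set V) → p ∈ H := by
      intro p q hpq hp hq
      rcases hp with ⟨hpH, _⟩ | hp2
      · exact hpH
      · exfalso
        rcases hq with ⟨hqH, hqv⟩ | hq2
        · exact hv2 (hp2 ▸ hHedge q p hpq.symm ⟨hqH, hqv⟩)
        · exact hpq.ne (hp2.trans hq2.symm)
    intro x hx
    rcases Sym2.mem_iff.mp hx with rfl | rfl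
    · exact key x b h (hall x (by simp)) (hall b (by simp))
    · exact key x a h.symm (hall x (by simp)) (hall a (by simp))

end Aux2

section Aux3

variable {V : Type*} [DecidableEq V]

lemma fwd_cycle (G : SimpleGraph V) (v1 v2 : V) (H : Set V) (h1 : v1 ∈ H) (hv2 : v2 ∉ H)
    (hHedge : ∀ x y : V, G.Adj x y → x ∈ H \ ({v1} : Set V) → y ∈ H)
    {u : V} (c : G.Walk u u) (hc : c.IsCycle) :
    ∃ u' : V, ∃ c' : (typeBFlip G v1 v2 H hv2).Walk u' u', c'.IsCycle ∧
      c'.edges = c.edges.map (phiB v1 v2 H) ∧ c'.length = c.length := by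
  rcases classify G v1 H h1 hHedge c hc with ht | ht
  · -- all edges inside H
    have htr : ∀ e ∈ c.edges, e ∈ (inSub G H).edgeSet := fun e he =>
      mem_inSub_edgeSet (c.edges_subset_edgeSet he) (ht e he)
    have hinj : Function.Injective (homFwd G v1 v2 H hv2) := (Equiv.swap v1 v2).injective
    refine ⟨_, ((c.transfer (inSub G H) htr).map (homFwd G v1 v2 H hv2)),
      (hc.transfer htr).map hinj, ?_, ?_⟩
    · rw [SimpleGraph.Walk.edges_map, SimpleGraph.Walk.edges_transfer]
      refine List.map_congr_left fun e he => ?_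
      rw [phiB_eq_map (ht e he), sym2_map_tau_eq hv2 (ht e he)]
      rfl
    · rw [SimpleGraph.Walk.length_map, SimpleGraph.Walk.length_transfer]
  · -- no edge inside H
    have htr : ∀ e ∈ c.edges, e ∈ (typeBFlip G v1 v2 H hv2).edgeSet := fun e he =>
      mem_flip_of_not (c.edges_subset_edgeSet he) (ht e he)
    refine ⟨u, c.transfer _ htr, hc.transfer htr, ?_, SimpleGraph.Walk.length_transfer _ _⟩
    rw [SimpleGraph.Walk.edges_transfer]
    refine ((List.map_congr_left fun e he => ?_).trans (List.map_id _)).symm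
    exact phiB_eq_self (ht e he)

lemma flip_hedge (G : SimpleGraph V) (v1 v2 : V) (H : Set V) (hv2 : v2 ∉ H)
    (hHedge : ∀ x y : V, G.Adj x y → x ∈ H \ ({v1} : Set V) → y ∈ H) :
    ∀ x y : V, (typeBFlip G v1 v2 H hv2).Adj x y →
      x ∈ ((H \ {v1}) ∪ ({v2} : Set V)) \ ({v2} : Set V) → y ∈ (H \ {v1}) ∪ ({v2} : Set V) := by
  rintro x y hxy ⟨hx, hxv⟩
  have hxH : x ∈ H \ {v1} := by
    rcases hx with h | h
    · exact h
    · exact absurd h hxv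
  rcases hxy with ⟨x', y', hx', hy', h, hxe, rfl⟩ | ⟨hn, h⟩
  · exact tauB_mem hy'
  · exact absurd ⟨hxH.1, hHedge x y h hxH⟩ hn

lemma bwd_cycle (G : SimpleGraph V) (v1 v2 : V) (H : Set V) (h1 : v1 ∈ H) (hv2 : v2 ∉ H)
    (hHedge : ∀ x y : V, G.Adj x y → x ∈ H \ ({v1} : Set V) → y ∈ H)
    {u : V} (c : (typeBFlip G v1 v2 H hv2).Walk u u) (hc : c.IsCycle) :
    ∃ u0 : V, ∃ d : G.Walk u0 u0, d.IsCycle ∧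
      c.edges = d.edges.map (phiB v1 v2 H) ∧ d.length = c.length := by
  have h1b : v2 ∈ (H \ {v1}) ∪ ({v2} : Set V) := Or.inr rfl
  rcases classify (typeBFlip G v1 v2 H hv2) v2 ((H \ {v1}) ∪ ({v2} : Set V)) h1b
    (flip_hedge G v1 v2 H hv2 hHedge) c hc with ht | ht
  · -- all edges inside H'
    have htr : ∀ e ∈ c.edges,
        e ∈ (inSub (typeBFlip G v1 v2 H hv2) ((H \ {v1}) ∪ ({v2} : Set V))).edgeSet := fun e he =>
      mem_inSub_edgeSet (c.edges_subset_edgeSet he) (ht e he)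
    have hinj : Function.Injective (homBwd G v1 v2 H hv2 hHedge) := (Equiv.swap v1 v2).injective
    refine ⟨_, ((c.transfer _ htr).map (homBwd G v1 v2 H hv2 hHedge)),
      (hc.transfer htr).map hinj, ?_, ?_⟩
    · rw [SimpleGraph.Walk.edges_map, SimpleGraph.Walk.edges_transfer, List.map_map]
      refine ((List.map_congr_left fun f hf => ?_).trans (List.map_id _)).symm
      have hallb : ∀ x ∈ f, x ∈ (H \ {v1}) ∪ ({v2} : Set V) := ht f hf
      have hallH : ∀ x ∈ f.map (Equiv.swap v1 v2), x ∈ H := by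
        intro x hx
        obtain ⟨y, hy, rfl⟩ := Sym2.mem_map.mp hx
        exact swap_mem_H h1 hv2 (hallb y hy)
      show phiB v1 v2 H (f.map (homBwd G v1 v2 H hv2 hHedge)) = f
      have hcoe : f.map (homBwd G v1 v2 H hv2 hHedge) = f.map (Equiv.swap v1 v2) := rfl
      rw [hcoe, phiB_eq_map hallH, sym2_map_tau_eq hv2 hallH, Sym2.map_map]
      have hid : (Equiv.swap v1 v2 : V → V) ∘ (Equiv.swap v1 v2) = id := by
        funext x; simp
      rw [hid, Sym2.map_id, id_eq]
    · rw [SimpleGraph.Walk.length_map, SimpleGraph.Walk.length_transfer]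
  · -- no edge inside H'
    have htr : ∀ e ∈ c.edges, e ∈ G.edgeSet := by
      intro e he
      have heG2 := c.edges_subset_edgeSet he
      have hne2 := ht e he
      revert heG2 hne2
      induction e using Sym2.ind with
      | _ a b =>
        intro heG2 hne2
        rcases (SimpleGraph.mem_edgeSet _).mp heG2 with ⟨x, y, hx, hy, h, rfl, rfl⟩ | ⟨hn, h⟩
        · exact absurd (fun z hz => by
            rcases Sym2.mem_iff.mp hz with rfl | rfl
            exacts [tauB_mem hx, tauB_mem hy]) hne2
        · exact (SimpleGraph.mem_edgeSet _).mpr h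
    refine ⟨u, c.transfer G htr, hc.transfer htr, ?_, SimpleGraph.Walk.length_transfer _ _⟩
    rw [SimpleGraph.Walk.edges_transfer]
    refine ((List.map_congr_left fun f hf => ?_).trans (List.map_id _)).symm
    refine phiB_eq_self ?_
    intro hallH
    have heG2 := c.edges_subset_edgeSet hf
    have hne2 := ht f hf
    revert hallH heG2 hne2
    induction f using Sym2.ind with
    | _ a b =>
      intro hallH heG2 hne2
      rcases (SimpleGraph.mem_edgeSet _).mp heG2 with ⟨x, y, hx, hy, h, ha, hb⟩ | ⟨hn, h⟩
      · refine hne2 fun z hz => ?_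
        rcases Sym2.mem_iff.mp hz with rfl | rfl
        · exact ha ▸ tauB_mem hx
        · exact hb ▸ tauB_mem hy
      · exact hn ⟨hallH a (by simp), hallH b (by simp)⟩

end Aux3

section Main

variable {V : Type*} [DecidableEq V]

lemma phiB_bijOn (G : SimpleGraph V) (v1 v2 : V) (H : Set V) (h1 : v1 ∈ H) (hv2 : v2 ∉ H)
    (hHedge : ∀ x y : V, G.Adj x y → x ∈ H \ ({v1} : Set V) → y ∈ H) :
    Set.BijOn (phiB v1 v2 H) G.edgeSet (typeBFlip G v1 v2 H hv2).edgeSet := by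
  refine ⟨?_, ?_, ?_⟩
  · -- MapsTo
    intro e he
    by_cases hall : ∀ x ∈ e, x ∈ H
    · rw [phiB_eq_map hall]
      exact mapped_mem_flip he hall
    · rw [phiB_eq_self hall]
      exact mem_flip_of_not he hall
  · -- InjOn
    intro e1 he1 e2 he2 heq
    by_cases ha1 : ∀ x ∈ e1, x ∈ H <;> by_cases ha2 : ∀ x ∈ e2, x ∈ H
    · rw [phiB_eq_map ha1, phiB_eq_map ha2, sym2_map_tau_eq hv2 ha1,
        sym2_map_tau_eq hv2 ha2] at heq
      exact Sym2.map.injective (Equiv.swap v1 v2).injective heq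
    · exfalso
      rw [phiB_eq_map ha1, phiB_eq_self ha2] at heq
      have hH2 : ∀ x ∈ e2, x ∈ (H \ {v1}) ∪ ({v2} : Set V) := by
        rw [← heq]
        intro x hx
        obtain ⟨y, hy, rfl⟩ := Sym2.mem_map.mp hx
        exact tauB_mem (ha1 y hy)
      exact ha2 (allH_of_allH' hv2 hHedge he2 hH2)
    · exfalso
      rw [phiB_eq_map ha2, phiB_eq_self ha1] at heq
      have hH2 : ∀ x ∈ e1, x ∈ (H \ {v1}) ∪ ({v2} : Set V) := by
        rw [heq]
        intro x hx
        obtain ⟨y, hy, rfl⟩ := Sym2.mem_map.mp hx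
        exact tauB_mem (ha2 y hy)
      exact ha1 (allH_of_allH' hv2 hHedge he1 hH2)
    · rw [phiB_eq_self ha1, phiB_eq_self ha2] at heq
      exact heq
  · -- SurjOn
    intro f hf
    revert hf
    induction f using Sym2.ind with
    | _ a b =>
      intro hf
      rcases (SimpleGraph.mem_edgeSet _).mp hf with ⟨x, y, hx, hy, h, rfl, rfl⟩ | ⟨hn, h⟩
      · refine ⟨s(x, y), (SimpleGraph.mem_edgeSet _).mpr h, ?_⟩
        rw [phiB_eq_map (fun z hz => by
          rcases Sym2.mem_iff.mp hz with rfl | rfl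
          exacts [hx, hy]), Sym2.map_pair_eq]
      · refine ⟨s(a, b), (SimpleGraph.mem_edgeSet _).mpr h, ?_⟩
        exact phiB_eq_self fun hall => hn ⟨hall a (by simp), hall b (by simp)⟩

end Main

/-- the edge map `phiB` of the Type B Whitney flip is a bijection from the
edge set of `G` onto the edge set of the flipped graph; a set `C` of edges of `G` is the
edge set of a cycle of `G` iff its image is the edge set of a cycle of the flipped graph;
in particular both graphs have cycles of exactly the same lengths. -/
theorem phiB_edge_bijection_cycles {V : Type*} [DecidableEq V] (G : SimpleGraph V)
    (v1 v2 : V) (hadj : G.Adj v1 v2)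
    (H : Set V) (h1 : v1 ∈ H) (hv2 : v2 ∉ H) (hHconn : (G.induce H).Connected)
    (hHedge : ∀ x y : V, G.Adj x y → x ∈ H \ ({v1} : Set V) → y ∈ H) :
    Set.BijOn (phiB v1 v2 H) G.edgeSet (typeBFlip G v1 v2 H hv2).edgeSet ∧
      (∀ C : Set (Sym2 V), C ⊆ G.edgeSet →
        ((∃ u : V, ∃ c : G.Walk u u, c.IsCycle ∧ C = {f | f ∈ c.edges}) ↔
          (∃ u : V, ∃ c : (typeBFlip G v1 v2 H hv2).Walk u u, c.IsCycle ∧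
            phiB v1 v2 H '' C = {f | f ∈ c.edges}))) ∧
      (∀ k : ℕ, (∃ u : V, ∃ c : G.Walk u u, c.IsCycle ∧ c.length = k) ↔
        (∃ u : V, ∃ c : (typeBFlip G v1 v2 H hv2).Walk u u, c.IsCycle ∧ c.length = k)) := by
  have hbij := phiB_bijOn G v1 v2 H h1 hv2 hHedge
  refine ⟨hbij, ?_, ?_⟩
  · intro C hC
    constructor
    · rintro ⟨u, c, hc, rfl⟩
      obtain ⟨u', c', hc', hed, _⟩ := fwd_cycle G v1 v2 H h1 hv2 hHedge c hc
      refine ⟨u', c', hc', ?_⟩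
      ext f
      simp only [Set.mem_image, Set.mem_setOf_eq, hed, List.mem_map]
    · rintro ⟨u, c, hc, himg⟩
      obtain ⟨u0, d, hd, hed, _⟩ := bwd_cycle G v1 v2 H h1 hv2 hHedge c hc
      refine ⟨u0, d, hd, ?_⟩
      have hDsub : {f | f ∈ d.edges} ⊆ G.edgeSet := fun f hf => d.edges_subset_edgeSet hf
      have h2 : phiB v1 v2 H '' {f | f ∈ d.edges} = {f | f ∈ c.edges} := by
        ext f
        simp only [Set.mem_image, Set.mem_setOf_eq, hed, List.mem_map]
      exact (hbij.injOn.image_eq_image_iff hC hDsub).mp (himg.trans h2.symm)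
  · intro k
    constructor
    · rintro ⟨u, c, hc, rfl⟩
      obtain ⟨u', c', hc', _, hlen⟩ := fwd_cycle G v1 v2 H h1 hv2 hHedge c hc
      exact ⟨u', c', hc', hlen⟩
    · rintro ⟨u, c, hc, rfl⟩
      obtain ⟨u0, d, hd, _, hlen⟩ := bwd_cycle G v1 v2 H h1 hv2 hHedge c hc
      exact ⟨u0, d, hd, hlen⟩
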